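/- Given a commutative diagram of short exact sequences of C*-algebras with vertical maps f : A' → A, g : B' → B, h : C' → C connecting 0 → A' → B' → C' → 0 to 0 → A → B → C → 0, the induced sequence of mapping cones 0 → Cf → Cg → Ch → 0 is short exact. -/

import Mathlib

/-!
STATEMENT 3: Given a commutative diagram of short exact sequences of
C*-algebras with vertical maps `f : A' → A`, `g : B' → B`, `h : C' → C`
connecting `0 → A' → B' → C' → 0` to `0 → A → B → C → 0`, the induced sequence
of mapping cones `0 → Cf → Cg → Ch → 0` is short exact.  Here
`Cf = {(a', φ) ∈ A' ⊕ C([0,1], A) : φ 1 = 0, f a' = φ 0}`, and the maps between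
the mapping cones are induced componentwise by the horizontal maps.
-/

open unitInterval
open scoped CStarAlgebra

variable {A B C A' B' C' : Type*}
  [NonUnitalCStarAlgebra A] [NonUnitalCStarAlgebra B] [NonUnitalCStarAlgebra C]
  [NonUnitalCStarAlgebra A'] [NonUnitalCStarAlgebra B'] [NonUnitalCStarAlgebra C']

/-- The mapping cone of `f : A' → A`, as a subset of `A' × C([0,1], A)`:
pairs `(a', φ)` with `φ 1 = 0` and `f a' = φ 0`. -/
def mappingConeSet {A A' : Type*} [NonUnitalCStarAlgebra A] [NonUnitalCStarAlgebra A']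
    (f : A' →⋆ₙₐ[ℂ] A) : Set (A' × C(unitInterval, A)) :=
  {p | p.2 1 = 0 ∧ f p.1 = p.2 0}

/-- The map `Cf → Cg` induced componentwise by `iA' : A' → B'` and `iA : A → B`. -/
def mappingConeMap {A A' B B' : Type*} [NonUnitalCStarAlgebra A] [NonUnitalCStarAlgebra A']
    [NonUnitalCStarAlgebra B] [NonUnitalCStarAlgebra B']
    (iA' : A' →⋆ₙₐ[ℂ] B') (iA : A →⋆ₙₐ[ℂ] B) :
    A' × C(unitInterval, A) → B' × C(unitInterval, B) :=
  fun p => (iA' p.1, ContinuousMap.comp ⟨⇑iA, map_continuous iA⟩ p.2)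


section AuxLemmas

lemma hat_eq (y : ℝ) : max 0 (1 - |y|) = min 1 (max 0 (y + 1)) - min 1 (max 0 y) := by
  rcases le_total y 0 with hy | hy
  · rw [abs_of_nonpos hy, max_eq_left hy, min_eq_right (by norm_num : (0:ℝ) ≤ 1)]
    rcases le_total y (-1) with h1 | h1
    · rw [max_eq_left (by linarith), max_eq_left (by linarith),
        min_eq_right (by norm_num : (0:ℝ) ≤ 1)]
      ring
    · rw [max_eq_right (by linarith), max_eq_right (by linarith),
        min_eq_right (by linarith)]
      ring
  · rw [abs_of_nonneg hy, max_eq_right hy]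
    rcases le_total y 1 with h1 | h1
    · rw [max_eq_right (by linarith), max_eq_right (by linarith),
        min_eq_left (by linarith), min_eq_right h1]
    · rw [max_eq_left (by linarith), max_eq_right (by linarith),
        min_eq_left (by linarith), min_eq_left h1]
      ring

lemma hat_sum {n : ℕ} {u : ℝ} (h0 : 0 ≤ u) (hu : u ≤ n) :
    ∑ i ∈ Finset.range (n + 1), max 0 (1 - |u - (i : ℝ)|) = 1 := by
  have key : ∀ i ∈ Finset.range (n+1), max 0 (1 - |u - (i : ℝ)|) =
      (fun j : ℕ => min 1 (max 0 (u - (j : ℝ) + 1))) i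
        - (fun j : ℕ => min 1 (max 0 (u - (j : ℝ) + 1))) (i + 1) := by
    intro i _
    simp only []
    rw [hat_eq (u - i)]
    norm_num
    ring_nf
  rw [Finset.sum_congr rfl key, Finset.sum_range_sub']
  simp only [Nat.cast_zero, Nat.cast_add, Nat.cast_one]
  rw [max_eq_right (by linarith), min_eq_left (by linarith),
    max_eq_left (by push_cast; linarith), min_eq_right (by norm_num)]
  ring

variable {E F : Type*} [NormedAddCommGroup E] [NormedSpace ℂ E]
  [NormedAddCommGroup F] [NormedSpace ℂ F]

lemma approx_lift (T : E →L[ℂ] F) {M : ℝ} (hM : 0 ≤ M)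
    (hT : ∀ y : F, ∃ x, T x = y ∧ ‖x‖ ≤ M * ‖y‖)
    (ψ : C(unitInterval, F)) {ε : ℝ} (hε : 0 < ε) :
    ∃ φ : C(unitInterval, E), (∀ t, ‖T (φ t) - ψ t‖ ≤ ε) ∧ ‖φ‖ ≤ M * ‖ψ‖ := by
  -- uniform continuity of ψ
  have hUC : UniformContinuous (⇑ψ) :=
    CompactSpace.uniformContinuous_of_continuous ψ.continuous
  obtain ⟨δ, hδ0, hδ⟩ := Metric.uniformContinuous_iff.mp hUC ε hε
  obtain ⟨m, hm⟩ := exists_nat_one_div_lt hδ0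
  set n : ℕ := m + 1 with hn
  have hn0 : (0:ℝ) < n := by positivity
  have hnδ : 1 / (n:ℝ) < δ := by rw [hn]; push_cast; exact hm
  -- sample points
  set p : ℕ → unitInterval := fun i => Set.projIcc 0 1 zero_le_one ((i : ℝ) / n) with hp
  have hpval : ∀ i : ℕ, i ≤ n → ((p i : ℝ)) = (i : ℝ) / n := by
    intro i hi
    rw [hp]
    dsimp only
    rw [Set.projIcc_of_mem zero_le_one
      ⟨by positivity, by rw [div_le_one hn0]; exact_mod_cast hi⟩]
  -- lifts of the sampled values
  choose x hx1 hx2 using fun i => hT (ψ (p i))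
  -- hat functions
  set ρ : ℕ → unitInterval → ℝ := fun i t => max 0 (1 - |(n : ℝ) * t - i|) with hρ
  have hρc : ∀ i, Continuous (ρ i) := by
    intro i; rw [hρ]; fun_prop
  have hρnn : ∀ i t, 0 ≤ ρ i t := fun i t => le_max_left _ _
  have hρsum : ∀ t : unitInterval, ∑ i ∈ Finset.range (n+1), ρ i t = 1 := by
    intro t
    exact hat_sum (by have := t.2.1; positivity)
      (by have := t.2.2; calc (n:ℝ) * t ≤ n * 1 := by nlinarith
          _ = n := mul_one _)
  have hρclose : ∀ i ∈ Finset.range (n+1), ∀ t : unitInterval,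
      ρ i t ≠ 0 → dist (p i) t < δ := by
    intro i hi t hne
    have hi' : i ≤ n := Nat.lt_succ_iff.mp (Finset.mem_range.mp hi)
    have h1 : |(n : ℝ) * t - i| < 1 := by
      by_contra hcon
      push_neg at hcon
      exact hne (max_eq_left (by linarith))
    rw [Subtype.dist_eq, hpval i hi', Real.dist_eq]
    have h2 : (n:ℝ) * t - i = n * ((i:ℝ)/n - t) * (-1) := by field_simp; ring
    have h3 : |(i : ℝ)/n - t| = |(n:ℝ) * t - i| / n := by
      rw [h2, abs_mul, abs_mul, abs_of_pos hn0, abs_neg, abs_one, mul_one,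
        mul_div_assoc]
      field_simp
    rw [h3]
    calc |(n:ℝ) * t - i| / n < 1 / n := by gcongr
      _ < δ := hnδ
  -- the candidate lift
  have hcont : Continuous fun t : unitInterval =>
      ∑ i ∈ Finset.range (n+1), (((ρ i t : ℝ)) : ℂ) • x i := by
    apply continuous_finset_sum
    intro i _
    exact (Complex.continuous_ofReal.comp (hρc i)).smul continuous_const
  refine ⟨⟨_, hcont⟩, ?_, ?_⟩
  · intro t
    simp only [ContinuousMap.coe_mk]
    rw [map_sum]
    simp only [map_smul, hx1]
    have key : ∑ i ∈ Finset.range (n+1), (((ρ i t : ℝ)) : ℂ) • ψ (p i) - ψ t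
        = ∑ i ∈ Finset.range (n+1), (((ρ i t : ℝ)) : ℂ) • (ψ (p i) - ψ t) := by
      simp only [smul_sub, Finset.sum_sub_distrib, ← Finset.sum_smul]
      norm_cast
      rw [hρsum t]
      norm_num
    rw [key]
    calc ‖∑ i ∈ Finset.range (n+1), (((ρ i t : ℝ)) : ℂ) • (ψ (p i) - ψ t)‖
        ≤ ∑ i ∈ Finset.range (n+1), ‖(((ρ i t : ℝ)) : ℂ) • (ψ (p i) - ψ t)‖ :=
          norm_sum_le _ _
      _ ≤ ∑ i ∈ Finset.range (n+1), ρ i t * ε := by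
          apply Finset.sum_le_sum
          intro i hi
          rw [norm_smul, Complex.norm_real, Real.norm_eq_abs,
            abs_of_nonneg (hρnn i t)]
          by_cases hz : ρ i t = 0
          · simp [hz]
          · apply mul_le_mul_of_nonneg_left _ (hρnn i t)
            rw [← dist_eq_norm]
            exact le_of_lt (hδ (hρclose i hi t hz))
      _ = ε := by rw [← Finset.sum_mul, hρsum t, one_mul]
  · rw [ContinuousMap.norm_le _ (by positivity)]
    intro t
    simp only [ContinuousMap.coe_mk]
    calc ‖∑ i ∈ Finset.range (n+1), (((ρ i t : ℝ)) : ℂ) • x i‖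
        ≤ ∑ i ∈ Finset.range (n+1), ‖(((ρ i t : ℝ)) : ℂ) • x i‖ := norm_sum_le _ _
      _ ≤ ∑ i ∈ Finset.range (n+1), ρ i t * (M * ‖ψ‖) := by
          apply Finset.sum_le_sum
          intro i _
          rw [norm_smul, Complex.norm_real, Real.norm_eq_abs,
            abs_of_nonneg (hρnn i t)]
          apply mul_le_mul_of_nonneg_left _ (hρnn i t)
          exact le_trans (hx2 i)
            (mul_le_mul_of_nonneg_left (ψ.norm_coe_le_norm (p i)) hM)
      _ = M * ‖ψ‖ := by rw [← Finset.sum_mul, hρsum t, one_mul]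

lemma exact_lift [CompleteSpace E] [CompleteSpace F] (T : E →L[ℂ] F)
    (hsurj : Function.Surjective T) (ψ : C(unitInterval, F)) :
    ∃ φ : C(unitInterval, E), ∀ t, T (φ t) = ψ t := by
  obtain ⟨M, hM0, hT⟩ := T.exists_preimage_norm_le hsurj
  set Tc : C(unitInterval, E) →L[ℂ] C(unitInterval, F) :=
    ContinuousLinearMap.compLeftContinuous ℂ unitInterval T with hTc
  have hTcapp : ∀ (φ : C(unitInterval, E)) (t : unitInterval), Tc φ t = T (φ t) :=
    fun φ t => rfl
  -- half-error approximate lifting as a function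
  have hR : ∀ χ : C(unitInterval, F), ∃ φ : C(unitInterval, E),
      ‖Tc φ - χ‖ ≤ ‖χ‖ / 2 ∧ ‖φ‖ ≤ M * ‖χ‖ := by
    intro χ
    by_cases hχ : χ = 0
    · exact ⟨0, by simp [hχ], by simp [hχ]⟩
    · have hpos : 0 < ‖χ‖ / 2 := by
        have := (norm_pos_iff (a := χ)).mpr hχ
        linarith
      obtain ⟨φ, hφ1, hφ2⟩ := approx_lift T (le_of_lt hM0) hT χ hpos
      refine ⟨φ, ?_, hφ2⟩
      rw [ContinuousMap.norm_le _ (le_of_lt hpos)]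
      intro t
      simpa [hTcapp] using hφ1 t
  choose R hR1 hR2 using hR
  -- the iteration
  set S : C(unitInterval, F) → C(unitInterval, F) := fun χ => χ - Tc (R χ) with hS
  set χs : ℕ → C(unitInterval, F) := fun k => S^[k] ψ with hχs
  have hχsucc : ∀ k, χs (k + 1) = χs k - Tc (R (χs k)) := by
    intro k
    rw [hχs]
    simp only [Function.iterate_succ_apply']
    rfl
  have hbound : ∀ k, ‖χs k‖ ≤ ‖ψ‖ * (1/2)^k := by
    intro k
    induction k with
    | zero => simp [hχs]
    | succ k ih =>
        rw [hχsucc k]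
        calc ‖χs k - Tc (R (χs k))‖ = ‖Tc (R (χs k)) - χs k‖ := norm_sub_rev _ _
          _ ≤ ‖χs k‖ / 2 := hR1 _
          _ ≤ (‖ψ‖ * (1/2)^k) / 2 := by linarith
          _ = ‖ψ‖ * (1/2)^(k+1) := by ring
  -- summability
  have hsummable : Summable (fun k => R (χs k)) := by
    apply Summable.of_norm_bounded (g := fun k => M * ‖ψ‖ * (1/2)^k)
    · exact (summable_geometric_of_lt_one (by norm_num) (by norm_num)).mul_left _
    · intro k
      calc ‖R (χs k)‖ ≤ M * ‖χs k‖ := hR2 _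
        _ ≤ M * (‖ψ‖ * (1/2)^k) := by
            exact mul_le_mul_of_nonneg_left (hbound k) (le_of_lt hM0)
        _ = M * ‖ψ‖ * (1/2)^k := by ring
  set φ : C(unitInterval, E) := ∑' k, R (χs k) with hφdef
  have hhs : HasSum (fun k => R (χs k)) φ := hsummable.hasSum
  have hhs2 : HasSum (fun k => Tc (R (χs k))) (Tc φ) := Tc.hasSum hhs
  have hterm : ∀ k, Tc (R (χs k)) = χs k - χs (k+1) := by
    intro k; rw [hχsucc k]; abel
  have htendsto : Filter.Tendsto (fun nn => ∑ k ∈ Finset.range nn, Tc (R (χs k)))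
      Filter.atTop (nhds (Tc φ)) := hhs2.tendsto_sum_nat
  have hpartial : ∀ nn, ∑ k ∈ Finset.range nn, Tc (R (χs k)) = ψ - χs nn := by
    intro nn
    simp only [hterm]
    rw [Finset.sum_range_sub' χs]
    simp [hχs]
  have hχ0 : Filter.Tendsto χs Filter.atTop (nhds 0) := by
    apply squeeze_zero_norm hbound
    have := (tendsto_pow_atTop_nhds_zero_of_lt_one
      (by norm_num : (0:ℝ) ≤ 1/2) (by norm_num)).const_mul ‖ψ‖
    simpa using this
  have h2 : Filter.Tendsto (fun nn => ψ - χs nn) Filter.atTop (nhds ψ) := by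
    have := (tendsto_const_nhds (x := ψ) (f := Filter.atTop (α := ℕ))).sub hχ0
    simpa using this
  have hfinal : Tc φ = ψ := tendsto_nhds_unique (by simpa [hpartial] using htendsto) h2
  exact ⟨φ, fun t => by rw [← hTcapp, hfinal]⟩

end AuxLemmas

/-- A non-unital star homomorphism as a continuous linear map. -/
def NonUnitalStarAlgHom.toCLM' {B C : Type*} [NonUnitalCStarAlgebra B]
    [NonUnitalCStarAlgebra C] (q : B →⋆ₙₐ[ℂ] C) : B →L[ℂ] C :=
  { toFun := ⇑q
    map_add' := fun x y => map_add q x y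
    map_smul' := fun c x => map_smul q c x
    cont := map_continuous q }

theorem mappingCone_sequence_exact
    (iA : A →⋆ₙₐ[ℂ] B) (qB : B →⋆ₙₐ[ℂ] C) (iA' : A' →⋆ₙₐ[ℂ] B') (qB' : B' →⋆ₙₐ[ℂ] C')
    (f : A' →⋆ₙₐ[ℂ] A) (g : B' →⋆ₙₐ[ℂ] B) (h : C' →⋆ₙₐ[ℂ] C)
    -- the top row is short exact
    (hiA : Function.Injective iA) (hqB : Function.Surjective qB)
    (hexact : ∀ b : B, qB b = 0 ↔ b ∈ Set.range iA)
    -- the bottom row is short exact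
    (hiA' : Function.Injective iA') (hqB' : Function.Surjective qB')
    (hexact' : ∀ b : B', qB' b = 0 ↔ b ∈ Set.range iA')
    -- the diagram commutes
    (hcomm₁ : ∀ a : A', g (iA' a) = iA (f a))
    (hcomm₂ : ∀ b : B', h (qB' b) = qB (g b)) :
    -- the induced maps take `Cf` into `Cg` and `Cg` into `Ch`
    (∀ p ∈ mappingConeSet f, mappingConeMap iA' iA p ∈ mappingConeSet g) ∧
    (∀ p ∈ mappingConeSet g, mappingConeMap qB' qB p ∈ mappingConeSet h) ∧
    -- injectivity of `Cf → Cg`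
    Set.InjOn (mappingConeMap iA' iA) (mappingConeSet f) ∧
    -- surjectivity of `Cg → Ch`
    (∀ r ∈ mappingConeSet h, ∃ p ∈ mappingConeSet g, mappingConeMap qB' qB p = r) ∧
    -- exactness in the middle
    ({p ∈ mappingConeSet g | mappingConeMap qB' qB p = 0} =
      mappingConeMap iA' iA '' mappingConeSet f) := by
  refine ⟨?_, ?_, ?_, ?_, ?_⟩
  · -- Cf → Cg well-defined
    rintro ⟨a', φ⟩ ⟨h1, h2⟩
    constructor
    · show iA (φ 1) = 0
      rw [show φ 1 = 0 from h1, map_zero]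
    · show g (iA' a') = iA (φ 0)
      rw [hcomm₁, h2]
  · -- Cg → Ch well-defined
    rintro ⟨b', φ⟩ ⟨h1, h2⟩
    constructor
    · show qB (φ 1) = 0
      rw [show φ 1 = 0 from h1, map_zero]
    · show h (qB' b') = qB (φ 0)
      rw [hcomm₂, h2]
  · -- injectivity of Cf → Cg
    rintro ⟨a₁, φ₁⟩ - ⟨a₂, φ₂⟩ - heq
    simp only [mappingConeMap, Prod.mk.injEq] at heq
    obtain ⟨e1, e2⟩ := heq
    refine Prod.ext (hiA' e1) ?_
    ext t
    exact hiA (ContinuousMap.congr_fun e2 t)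
  · -- surjectivity of Cg → Ch
    rintro ⟨c', ψ⟩ ⟨h1, h2⟩
    obtain ⟨φ₀, hφ₀⟩ := exact_lift qB.toCLM' (by exact hqB) ψ
    have hψlift : ∀ t, qB (φ₀ t) = ψ t := hφ₀
    obtain ⟨b₀, hb₀⟩ := hqB' c'
    have key0 : qB (φ₀ 0 - g b₀) = 0 := by
      rw [map_sub, hψlift 0, ← hcomm₂, hb₀, ← h2, sub_self]
    have key1 : qB (φ₀ 1) = 0 := by
      rw [hψlift 1, show ψ 1 = 0 from h1]
    set d : unitInterval → B := fun t =>
      (((1 - (t:ℝ)) : ℝ) : ℂ) • (φ₀ 0 - g b₀) + (((t:ℝ) : ℝ) : ℂ) • (φ₀ 1) with hd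
    have hdcont : Continuous d := by
      rw [hd]; fun_prop
    set φ : C(unitInterval, B) := ⟨fun t => φ₀ t - d t, by fun_prop⟩ with hφdef
    refine ⟨(b₀, φ), ⟨?_, ?_⟩, ?_⟩
    · show φ₀ 1 - d 1 = 0
      rw [hd]
      simp
    · show g b₀ = φ₀ 0 - d 0
      rw [hd]
      simp
    · refine Prod.ext hb₀ ?_
      ext t
      show qB (φ t) = ψ t
      simp only [hφdef, ContinuousMap.coe_mk]
      rw [map_sub, hψlift t]
      have hdz : qB (d t) = 0 := by
        rw [hd]
        simp only [map_add, map_smul, key0, key1, smul_zero, add_zero]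
      rw [hdz, sub_zero]
  · -- exactness in the middle
    ext p
    obtain ⟨b', φ⟩ := p
    constructor
    · rintro ⟨⟨h1, h2⟩, heq⟩
      rw [Prod.ext_iff] at heq
      obtain ⟨e1, e2⟩ := heq
      obtain ⟨a', ha'⟩ := (hexact' b').mp e1
      have hrange : ∀ t, φ t ∈ Set.range iA := fun t =>
        (hexact (φ t)).mp (ContinuousMap.congr_fun e2 t)
      choose ξ hξ using hrange
      have hiso : Isometry iA := NonUnitalStarAlgHom.isometry iA hiA
      have hξcont : Continuous ξ := by
        rw [hiso.isEmbedding.continuous_iff]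
        have : ⇑iA ∘ ξ = ⇑φ := funext hξ
        rw [this]
        exact φ.continuous
      refine ⟨(a', ⟨ξ, hξcont⟩), ⟨?_, ?_⟩, ?_⟩
      · apply hiA
        show iA (ξ 1) = iA 0
        rw [hξ 1, show φ 1 = 0 from h1, map_zero]
      · apply hiA
        show iA (f a') = iA (ξ 0)
        rw [hξ 0, ← hcomm₁, ha', h2]
      · refine Prod.ext ha' ?_
        ext t
        exact hξ t
    · rintro ⟨⟨a', ξ⟩, ⟨h1, h2⟩, heq⟩
      rw [← heq]
      refine ⟨⟨?_, ?_⟩, ?_⟩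
      · show iA (ξ 1) = 0
        rw [show ξ 1 = 0 from h1, map_zero]
      · show g (iA' a') = iA (ξ 0)
        rw [hcomm₁, h2]
      · refine Prod.ext ?_ ?_
        · show qB' (iA' a') = 0
          exact (hexact' _).mpr ⟨a', rfl⟩
        · ext t
          show qB (iA (ξ t)) = 0
          exact (hexact _).mpr ⟨ξ t, rfl⟩
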